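/- Let G be a finite twin-free split graph with vertex set partitioned into a clique K of size k which is a maximal clique of G and an independent set S. Then there exists a subset S' ⊆ S with |S'| ≤ k − 1 such that for every pair of distinct vertices x, y ∈ K one has N[x] ∩ S' ≠ N[y] ∩ S'. -/
import Mathlib


open SimpleGraph Set

variable {V : Type*}

/-- The closed neighborhood of a vertex. -/
def closedNbhd (G : SimpleGraph V) (v : V) : Set V := insert v (G.neighborSet v)

/-- A (not necessarily proper) coloring `c : V → Fin k` is a relaxed locally identifying coloring
(rlid-coloring) if any two adjacent vertices with distinct closed neighborhoods receive distinct
sets of colors on their closed neighborhoods. -/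
def IsRlidColoring (G : SimpleGraph V) {k : ℕ} (c : V → Fin k) : Prop :=
  ∀ u v : V, G.Adj u v → closedNbhd G u ≠ closedNbhd G v →
    c '' closedNbhd G u ≠ c '' closedNbhd G v

/-- The relaxed locally identifying chromatic number: the least `k` such that `G` admits an
rlid-coloring with `k` colors. -/
noncomputable def rlidChromNum (G : SimpleGraph V) : ℕ :=
  sInf {k : ℕ | ∃ c : V → Fin k, IsRlidColoring G c}

/-- A graph is twin-free if distinct vertices have distinct closed neighborhoods. -/
def TwinFree (G : SimpleGraph V) : Prop :=
  ∀ u v : V, closedNbhd G u = closedNbhd G v → u = v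

lemma bondy_aux {α : Type*} [DecidableEq α] (K S : Finset α) (F : α → Finset α)
    (hFS : ∀ x ∈ K, F x ⊆ S)
    (hinj : ∀ x ∈ K, ∀ y ∈ K, x ≠ y → F x ≠ F y) :
    ∃ S' : Finset α, S' ⊆ S ∧ S'.card ≤ K.card - 1 ∧
      ∀ x ∈ K, ∀ y ∈ K, x ≠ y → F x ∩ S' ≠ F y ∩ S' := by
  have main : ∀ j : ℕ, ∃ S' : Finset α, S' ⊆ S ∧ S'.card ≤ j ∧
      min (j + 1) K.card ≤ (K.image fun x => F x ∩ S').card := by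
    intro j
    induction j with
    | zero =>
      refine ⟨∅, Finset.empty_subset _, le_refl _, ?_⟩
      rcases K.eq_empty_or_nonempty with h | h
      · simp [h]
      · have : (K.image fun x => F x ∩ (∅ : Finset α)).Nonempty := h.image _
        have := Finset.card_pos.2 this
        omega
    | succ j ih =>
      obtain ⟨S', hS'S, hcard, himg⟩ := ih
      by_cases hle : K.card ≤ j + 1
      · exact ⟨S', hS'S, hcard.trans (Nat.le_succ j), by omega⟩
      push_neg at hle
      by_cases himg2 : j + 2 ≤ (K.image fun x => F x ∩ S').card
      · exact ⟨S', hS'S, hcard.trans (Nat.le_succ j), by omega⟩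
      push_neg at himg2
      have hlt : (K.image fun x => F x ∩ S').card < K.card := by omega
      obtain ⟨x, hx, y, hy, hxy, hfeq⟩ :=
        Finset.exists_ne_map_eq_of_card_lt_of_maps_to hlt
          (fun a ha => Finset.mem_image_of_mem _ ha)
      have hne := hinj x hx y hy hxy
      have hex : ∃ s, (s ∈ F x ∧ s ∉ F y) ∨ (s ∈ F y ∧ s ∉ F x) := by
        by_contra h
        push_neg at h
        apply hne
        ext s
        have := h s
        tauto
      obtain ⟨s, hs⟩ := hex
      have hsS : s ∈ S := by
        rcases hs with ⟨h1, _⟩ | ⟨h1, _⟩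
        exacts [hFS x hx h1, hFS y hy h1]
      refine ⟨insert s S', Finset.insert_subset hsS hS'S,
        (Finset.card_insert_le _ _).trans (Nat.succ_le_succ hcard), ?_⟩
      set g' : α → Finset α := fun a => F a ∩ S' with hg'
      set g'' : α → Finset α := fun a => F a ∩ insert s S' with hg''
      have hrefine : ∀ a, g' a = g'' a ∩ S' := by
        intro a
        simp only [hg', hg'']
        ext t
        simp only [Finset.mem_inter, Finset.mem_insert]
        tauto
      have himage : K.image g' = (K.image g'').image (· ∩ S') := by
        rw [Finset.image_image]
        apply Finset.image_congr
        intro a _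
        exact hrefine a
      have hgxy : g'' x ≠ g'' y := by
        intro h
        rcases hs with ⟨h1, h2⟩ | ⟨h1, h2⟩
        · have : s ∈ g'' x := Finset.mem_inter.2 ⟨h1, Finset.mem_insert_self _ _⟩
          rw [h] at this
          exact h2 (Finset.mem_inter.1 this).1
        · have : s ∈ g'' y := Finset.mem_inter.2 ⟨h1, Finset.mem_insert_self _ _⟩
          rw [← h] at this
          exact h2 (Finset.mem_inter.1 this).1
      have hgxyS : g'' x ∩ S' = g'' y ∩ S' := by
        rw [← hrefine x, ← hrefine y]
        exact hfeq
      have hmemx : g'' x ∈ K.image g'' := Finset.mem_image_of_mem _ hx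
      have hmemy : g'' y ∈ K.image g'' := Finset.mem_image_of_mem _ hy
      have herase : (K.image g'').image (· ∩ S') =
          ((K.image g'').erase (g'' x)).image (· ∩ S') := by
        apply Finset.Subset.antisymm
        · intro c hc
          obtain ⟨d, hd, rfl⟩ := Finset.mem_image.1 hc
          by_cases hdx : d = g'' x
          · subst hdx
            refine Finset.mem_image.2 ⟨g'' y, ?_, hgxyS.symm⟩
            exact Finset.mem_erase.2 ⟨fun h => hgxy h.symm, hmemy⟩
          · exact Finset.mem_image.2 ⟨d, Finset.mem_erase.2 ⟨hdx, hd⟩, rfl⟩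
        · exact Finset.image_subset_image (Finset.erase_subset _ _)
      have hcard1 : (K.image g').card ≤ (K.image g'').card - 1 := by
        rw [himage, herase]
        calc (((K.image g'').erase (g'' x)).image (· ∩ S')).card
            ≤ ((K.image g'').erase (g'' x)).card := Finset.card_image_le
          _ = (K.image g'').card - 1 := Finset.card_erase_of_mem hmemx
      have hpos : 1 ≤ (K.image g'').card := Finset.card_pos.2 ⟨g'' x, hmemx⟩
      have : min (j + 1) K.card ≤ (K.image g').card := himg
      omega
  obtain ⟨S', hS'S, hcard, himg⟩ := main (K.card - 1)
  have hmin : min (K.card - 1 + 1) K.card = K.card := by omega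
  rw [hmin] at himg
  have hle : (K.image fun x => F x ∩ S').card ≤ K.card := Finset.card_image_le
  have heq : (K.image fun x => F x ∩ S').card = K.card := le_antisymm hle himg
  have hinjon : Set.InjOn (fun x => F x ∩ S') ↑K := Finset.injOn_of_card_image_eq heq
  exact ⟨S', hS'S, hcard, fun x hx y hy hxy h => hxy (hinjon hx hy h)⟩

/-- In a finite twin-free split graph whose vertex set is partitioned into a
maximal clique `K` (of size `k`) and an independent set `S`, there is a subset `S' ⊆ S` with
`|S'| ≤ k − 1` separating the closed neighborhoods of all pairs of distinct vertices of `K`. -/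
theorem split_separating_subset {V : Type*} [Fintype V] [DecidableEq V] (G : SimpleGraph V)
    (htf : TwinFree G) (K S : Finset V)
    (hpart : ∀ v : V, v ∈ K ↔ v ∉ S)
    (hK : G.IsClique ↑K)
    (hS : ∀ u ∈ S, ∀ v ∈ S, ¬ G.Adj u v)
    (hmax : ∀ v ∉ K, ∃ u ∈ K, ¬ G.Adj v u) :
    ∃ S' : Finset V, S' ⊆ S ∧ S'.card ≤ K.card - 1 ∧
      ∀ x ∈ K, ∀ y ∈ K, x ≠ y →
        closedNbhd G x ∩ ↑S' ≠ closedNbhd G y ∩ ↑S' := by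
  classical
  set F : V → Finset V := fun x => S.filter (fun s => G.Adj x s) with hF
  have hFS : ∀ x ∈ K, F x ⊆ S := fun x _ => Finset.filter_subset _ _
  have hclosed : ∀ x ∈ K, closedNbhd G x = ↑K ∪ ↑(F x) := by
    intro x hx
    ext v
    simp only [closedNbhd, Set.mem_insert_iff, SimpleGraph.mem_neighborSet,
      Set.mem_union, Finset.coe_filter, Set.mem_setOf_eq, Finset.mem_coe, hF]
    constructor
    · rintro (rfl | hadj)
      · exact Or.inl hx
      · by_cases hv : v ∈ K
        · exact Or.inl hv
        · exact Or.inr ⟨by_contra fun h => hv ((hpart v).2 h), hadj⟩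
    · rintro (hv | ⟨hvS, hadj⟩)
      · by_cases hvx : v = x
        · exact Or.inl hvx
        · exact Or.inr (hK hx hv (Ne.symm hvx))
      · exact Or.inr hadj
  have hinj : ∀ x ∈ K, ∀ y ∈ K, x ≠ y → F x ≠ F y := by
    intro x hx y hy hxy h
    apply hxy
    apply htf
    rw [hclosed x hx, hclosed y hy, h]
  obtain ⟨S', hS'S, hcard, hsep⟩ := bondy_aux K S F hFS hinj
  refine ⟨S', hS'S, hcard, ?_⟩
  intro x hx y hy hxy
  have key : ∀ z ∈ K, closedNbhd G z ∩ ↑S' = ↑(F z ∩ S') := by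
    intro z hz
    ext v
    simp only [closedNbhd, Set.mem_inter_iff, Set.mem_insert_iff,
      SimpleGraph.mem_neighborSet, Finset.coe_inter, Finset.mem_coe,
      Finset.mem_inter, hF, Finset.mem_filter]
    constructor
    · rintro ⟨(rfl | hadj), hvS'⟩
      · exact absurd ((hpart v).1 hz) (not_not.2 (hS'S hvS'))
      · exact ⟨⟨hS'S hvS', hadj⟩, hvS'⟩
    · rintro ⟨⟨_, hadj⟩, hvS'⟩
      exact ⟨Or.inr hadj, hvS'⟩
  intro h
  rw [key x hx, key y hy] at h
  exact hsep x hx y hy hxy (Finset.coe_injective h)
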